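/- Let A be a ring and T an n-silting A-module with respect to a projective n-presentation Σ (so Pres^{n-1}(T) = D_Σ). Then the subcategory Σ^{⊥ℤ} = {Y ∈ D(A) | Hom_{D(A)}(Σ, Y[i]) = 0 for all i ∈ ℤ} contains no nonzero A-module. -/

import Mathlib

open CategoryTheory Limits DerivedCategory

universe u

namespace Stmt6Aux

variable {A : Type u} [Ring A] [HasDerivedCategory.{u} (ModuleCat.{u} A)]

lemma key (S : CochainComplex (ModuleCat.{u} A) ℤ) (h1 : IsZero (S.X 1))
    (M : ModuleCat.{u} A)
    (hM : ∀ φ : Q.obj S ⟶ ((singleFunctor (ModuleCat.{u} A) 0).obj M)⟦(0:ℤ)⟧, φ = 0)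
    (g : S.homology 0 ⟶ M) : g = 0 := by
  have hd : S.d 0 1 = 0 := h1.eq_of_tgt _ _
  have hι : IsIso (S.homologyι 0) := S.isIso_homologyι 0 1 (by simp) hd
  have hb : ∀ i : ℤ, (ComplexShape.up ℤ).Rel i 0 →
      S.d i 0 ≫ (S.pOpcycles 0 ≫ inv (S.homologyι 0) ≫ g) = 0 := by
    intro i hi
    rw [← Category.assoc, HomologicalComplex.d_pOpcycles, zero_comp]
  set π : S ⟶ (HomologicalComplex.single (ModuleCat.{u} A) (ComplexShape.up ℤ) 0).obj M :=
    HomologicalComplex.mkHomToSingle (S.pOpcycles 0 ≫ inv (S.homologyι 0) ≫ g) hb with hπ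
  -- the comparison map in the derived category
  let α := (singleFunctorsPostcompQIso (ModuleCat.{u} A)).inv.hom 0
  have hα : IsIso α := by
    have : IsIso (singleFunctorsPostcompQIso (ModuleCat.{u} A)).inv := inferInstance
    infer_instance
  have hQπ : Q.map π = 0 := by
    have h := hM (Q.map π ≫ (α.app M ≫
      (shiftFunctorZero (DerivedCategory (ModuleCat.{u} A)) ℤ).inv.app
        ((singleFunctor (ModuleCat.{u} A) 0).obj M)))
    have : IsIso (α.app M) := NatIso.isIso_app_of_isIso α M
    have h' : Q.map π ≫ α.app M = 0 :=
      (cancel_mono ((shiftFunctorZero (DerivedCategory (ModuleCat.{u} A)) ℤ).inv.app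
        ((singleFunctor (ModuleCat.{u} A) 0).obj M))).mp
        ((Category.assoc _ _ _).trans (h.trans zero_comp.symm))
    exact (cancel_mono (α.app M)).mp (h'.trans zero_comp.symm)
  have h2 : HomologicalComplex.homologyMap π 0 = 0 := by
    have e := (homologyFunctorFactors (ModuleCat.{u} A) 0).hom.naturality π
    dsimp at e
    rw [hQπ] at e
    erw [Functor.map_zero, zero_comp] at e
    exact (cancel_epi ((homologyFunctorFactors (ModuleCat.{u} A) 0).hom.app S)).mp
      (e.symm.trans comp_zero.symm)
  have e1 : HomologicalComplex.opcyclesMap π 0 ≫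
      (HomologicalComplex.singleObjOpcyclesSelfIso
        (ComplexShape.up ℤ) (0 : ℤ) M).inv = inv (S.homologyι 0) ≫ g := by
    rw [← cancel_epi (S.pOpcycles 0), HomologicalComplex.p_opcyclesMap_assoc, hπ,
      HomologicalComplex.mkHomToSingle_f]
    simp only [Category.assoc, ← HomologicalComplex.singleObjOpcyclesSelfIso_hom_assoc,
      Iso.hom_inv_id, Category.comp_id]
  have hcomp : HomologicalComplex.homologyMap π 0 ≫
      (HomologicalComplex.singleObjHomologySelfIso
        (ComplexShape.up ℤ) (0 : ℤ) M).hom = g := by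
    rw [← HomologicalComplex.homologyι_singleObjOpcyclesSelfIso_inv, ← Category.assoc,
      HomologicalComplex.homologyι_naturality, Category.assoc, e1,
      IsIso.hom_inv_id_assoc]
  rw [← hcomp, h2, zero_comp]

end Stmt6Aux

/-- Let `T` be an `n`-silting `A`-module with respect to a projective
`n`-presentation `S` (i.e. `Pres^{n-1}(T) = D_S`).  Then
`S^{⊥ℤ} = {Y | Hom_{D(A)}(S, Y[i]) = 0 ∀ i ∈ ℤ}` contains no nonzero `A`-module. -/
theorem stmt6 {A : Type u} [Ring A] [HasDerivedCategory.{u} (ModuleCat.{u} A)]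
    (n : ℕ) (hn : 0 < n) (S : CochainComplex (ModuleCat.{u} A) ℤ)
    (hSb : ∀ i : ℤ, (i < -(n : ℤ) ∨ 0 < i) → IsZero (S.X i))
    (hSp : ∀ i : ℤ, Projective (S.X i))
    (T : ModuleCat.{u} A) (hT : Nonempty ((S.homology 0) ≅ T))
    (hsilting : ∀ M : ModuleCat.{u} A,
      (∃ (C : ℕ → ModuleCat.{u} A)
          (d : ∀ j : ℕ, C (j + 1) →ₗ[A] C j) (e : C 0 →ₗ[A] M),
        (∀ j < n, ∃ (ι : Type u) (s : C j →ₗ[A] (ι →₀ ↥T)) (p : (ι →₀ ↥T) →ₗ[A] C j),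
          p.comp s = LinearMap.id) ∧
        Function.Surjective e ∧ (2 ≤ n → Function.Exact (d 0) e) ∧
        (∀ j : ℕ, j + 3 ≤ n → Function.Exact (d (j + 1)) (d j))) ↔
      (∀ i : ℤ, 0 < i →
        ∀ φ : Q.obj S ⟶ ((singleFunctor (ModuleCat.{u} A) 0).obj M)⟦i⟧, φ = 0)) :
    ∀ M : ModuleCat.{u} A,
      (∀ i : ℤ, ∀ φ : Q.obj S ⟶ ((singleFunctor (ModuleCat.{u} A) 0).obj M)⟦i⟧, φ = 0) →
      IsZero M := by
  intro M hM
  obtain ⟨C, d, e, hret, hsurj, -, -⟩ := (hsilting M).mpr (fun i _ φ => hM i φ)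
  obtain ⟨ι, s, p, hps⟩ := hret 0 hn
  have hp : Function.Surjective p := fun x =>
    ⟨s x, by rw [← LinearMap.comp_apply, hps]; rfl⟩
  have h1 : IsZero (S.X 1) := hSb 1 (Or.inr one_pos)
  have hz : ∀ x : ι →₀ ↥T, e (p x) = 0 := by
    have hsingle : ∀ (i : ι) (t : ↥T), e (p (Finsupp.single i t)) = 0 := by
      intro i t
      set Li : ↥T →ₗ[A] ↥M := (e.comp p).comp (Finsupp.lsingle i) with hLi
      have hg : hT.some.hom ≫ (ModuleCat.ofHom Li : T ⟶ M) = 0 :=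
        Stmt6Aux.key S h1 M (fun φ => hM 0 φ) _
      have : (ModuleCat.ofHom Li : T ⟶ M) = 0 := by
        rw [← IsIso.inv_hom_id_assoc hT.some.hom (ModuleCat.ofHom Li : T ⟶ M), hg, comp_zero]
      exact congrArg (fun f : T ⟶ M => f.hom t) this
    intro x
    have : e (p x) = (e.comp p) x := rfl
    rw [this, ← Finsupp.sum_single x, map_finsuppSum]
    exact Finset.sum_eq_zero (fun i _ => hsingle i _)
  have hsub : Subsingleton ↥M := by
    constructor
    intro a b
    have ha : ∀ m : ↥M, m = 0 := by
      intro m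
      obtain ⟨c0, rfl⟩ := hsurj m
      obtain ⟨x, rfl⟩ := hp c0
      exact hz x
    rw [ha a, ha b]
  exact ModuleCat.isZero_of_subsingleton M
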